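/- Let f : [0,a] → ℝ be a continuous convex function with f(0) < 0, and let α > 0, p > 0. Then ∫₀ᵃ x^(α-1) |f(x)|^p dx ≥ C(α,p) · |f(0)|^p · a^α, where C(α,p) := inf_{0 ≤ β ≤ 1} ∫₀¹ u^(α-1) |u - β|^p du. -/

import Mathlib

open MeasureTheory Set


lemma integrableOn_aux {a α : ℝ} (ha : 0 < a) (hα : 0 < α) {g : ℝ → ℝ}
    (hg : AEMeasurable g (volume.restrict (Icc 0 a))) {M : ℝ}
    (hM : ∀ x ∈ Icc (0:ℝ) a, |g x| ≤ M) :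
    IntegrableOn (fun x => x ^ (α - 1) * g x) (Icc 0 a) := by
  have hr : IntegrableOn (fun x : ℝ => x ^ (α - 1)) (Icc 0 a) := by
    rw [integrableOn_Icc_iff_integrableOn_Ioc]
    have h := intervalIntegral.intervalIntegrable_rpow' (a := 0) (b := a)
      (by linarith : (-1:ℝ) < α - 1)
    rwa [intervalIntegrable_iff_integrableOn_Ioc_of_le ha.le] at h
  have hmeas : AEStronglyMeasurable (fun x => x ^ (α - 1) * g x)
      (volume.restrict (Icc 0 a)) := by
    have m1 : Measurable fun x : ℝ => x ^ (α - 1) := by measurability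
    exact (m1.aemeasurable.mul hg).aestronglyMeasurable
  refine Integrable.mono' (hr.const_mul M) hmeas ?_
  refine (ae_restrict_iff' measurableSet_Icc).2 (Filter.Eventually.of_forall fun x hx => ?_)
  have hx0 : (0:ℝ) ≤ x ^ (α - 1) := Real.rpow_nonneg hx.1 _
  rw [Real.norm_eq_abs, abs_mul, abs_of_nonneg hx0]
  calc x ^ (α - 1) * |g x| ≤ x ^ (α - 1) * M := by
        exact mul_le_mul_of_nonneg_left (hM x hx) hx0
    _ = M * x ^ (α - 1) := mul_comm _ _

lemma subst_aux {a α : ℝ} (ha : 0 < a) (hα : 0 < α) (p β : ℝ) :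
    ∫ x in Icc (0:ℝ) a, x ^ (α - 1) * |x / a - β| ^ p
      = a ^ α * ∫ u in Icc (0:ℝ) 1, u ^ (α - 1) * |u - β| ^ p := by
  have key : ∫ x in (0:ℝ)..a, x ^ (α - 1) * |x / a - β| ^ p
      = ∫ x in (0:ℝ)..a, a ^ (α - 1) * ((x / a) ^ (α - 1) * |x / a - β| ^ p) := by
    refine intervalIntegral.integral_congr fun x hx => ?_
    rw [uIcc_of_le ha.le] at hx
    have h1 : x ^ (α - 1) = a ^ (α - 1) * (x / a) ^ (α - 1) := by
      rw [← Real.mul_rpow ha.le (div_nonneg hx.1 ha.le), mul_div_cancel₀ x ha.ne']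
    rw [h1]; ring
  rw [integral_Icc_eq_integral_Ioc, ← intervalIntegral.integral_of_le ha.le, key,
    intervalIntegral.integral_const_mul, intervalIntegral.integral_comp_div
      (f := fun u => u ^ (α - 1) * |u - β| ^ p) ha.ne',
    zero_div, div_self ha.ne', smul_eq_mul,
    intervalIntegral.integral_of_le (zero_le_one), ← integral_Icc_eq_integral_Ioc,
    ← mul_assoc, ← Real.rpow_add_one ha.ne', sub_add_cancel]


-- key pointwise lemma
lemma exists_beta_aux {a : ℝ} (ha : 0 < a) {f : ℝ → ℝ} (hcont : ContinuousOn f (Icc 0 a))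
    (hconv : ConvexOn ℝ (Icc 0 a) f) (hf0 : f 0 < 0) :
    ∃ β ∈ Icc (0:ℝ) 1, ∀ x ∈ Icc (0:ℝ) a, |f 0| * |x / a - β| ≤ |f x| := by
  have h0mem : (0:ℝ) ∈ Icc (0:ℝ) a := left_mem_Icc.2 ha.le
  have hamem : a ∈ Icc (0:ℝ) a := right_mem_Icc.2 ha.le
  by_cases hfa : f a ≤ 0
  · refine ⟨1, right_mem_Icc.2 zero_le_one, fun x hx => ?_⟩
    set t := x / a with ht
    have ht0 : 0 ≤ t := div_nonneg hx.1 ha.le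
    have ht1 : t ≤ 1 := (div_le_one ha).2 hx.2
    have harg : (1 - t) • (0:ℝ) + t • a = x := by
      simp [smul_eq_mul, ht, div_mul_cancel₀ x ha.ne']
    have hc := hconv.2 h0mem hamem (by linarith : (0:ℝ) ≤ 1 - t) ht0 (by ring)
    rw [harg, smul_eq_mul, smul_eq_mul] at hc
    have hfx : f x ≤ 0 := by nlinarith
    rw [abs_of_neg hf0, abs_of_nonpos hfx, abs_of_nonpos (by linarith : t - 1 ≤ 0)]
    nlinarith
  · push_neg at hfa
    obtain ⟨x₀, hx₀mem, hx₀⟩ := intermediate_value_Icc ha.le hcont ⟨hf0.le, hfa.le⟩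
    have hx₀pos : 0 < x₀ := by
      rcases lt_or_eq_of_le hx₀mem.1 with h | h
      · exact h
      · exfalso; rw [← h] at hx₀; linarith
    have hx₀a : x₀ ≤ a := hx₀mem.2
    refine ⟨x₀ / a, ⟨div_nonneg hx₀pos.le ha.le, (div_le_one ha).2 hx₀a⟩, fun x hx => ?_⟩
    have habs : |x / a - x₀ / a| = |x - x₀| / a := by
      rw [div_sub_div_same, abs_div, abs_of_pos ha]
    rcases le_or_gt x x₀ with hle | hlt
    · -- x ≤ x₀
      set t := x / x₀ with ht
      have ht0 : 0 ≤ t := div_nonneg hx.1 hx₀pos.le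
      have ht1 : t ≤ 1 := (div_le_one hx₀pos).2 hle
      have harg : (1 - t) • (0:ℝ) + t • x₀ = x := by
        simp [smul_eq_mul, ht, div_mul_cancel₀ x hx₀pos.ne']
      have hc := hconv.2 h0mem (⟨hx₀pos.le, hx₀a⟩ : x₀ ∈ Icc (0:ℝ) a)
        (by linarith : (0:ℝ) ≤ 1 - t) ht0 (by ring)
      rw [harg, smul_eq_mul, smul_eq_mul, hx₀] at hc
      -- hc : f x ≤ (1 - t) * f 0 + t * 0
      have hc' : f x * x₀ ≤ (x₀ - x) * f 0 := by
        have e : (1 - t) * f 0 + t * 0 = ((x₀ - x) / x₀) * f 0 := by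
          rw [ht, sub_div, div_self hx₀pos.ne']; ring
        rw [e, div_mul_eq_mul_div, le_div_iff₀ hx₀pos] at hc
        exact hc
      have hfx : f x ≤ 0 := by nlinarith
      rw [abs_of_neg hf0, abs_of_nonpos hfx, habs, abs_of_nonpos (by linarith : x - x₀ ≤ 0)]
      rw [mul_comm, div_mul_eq_mul_div, div_le_iff₀ ha]
      nlinarith
    · -- x₀ < x
      have hxpos : 0 < x := hx₀pos.trans hlt
      set t := x₀ / x with ht
      have ht0 : 0 ≤ t := div_nonneg hx₀pos.le hxpos.le
      have ht1 : t ≤ 1 := (div_le_one hxpos).2 hlt.le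
      have harg : (1 - t) • (0:ℝ) + t • x = x₀ := by
        simp [smul_eq_mul, ht, div_mul_cancel₀ x₀ hxpos.ne']
      have hc := hconv.2 h0mem hx (by linarith : (0:ℝ) ≤ 1 - t) ht0 (by ring)
      rw [harg, smul_eq_mul, smul_eq_mul, hx₀] at hc
      -- hc : 0 ≤ (1 - t) * f 0 + t * f x ; multiply by x
      have hc' : (x - x₀) * (-f 0) ≤ x₀ * f x := by
        have : 0 ≤ ((1 - t) * f 0 + t * f x) * x := mul_nonneg hc hxpos.le
        have e1 : t * x = x₀ := by rw [ht]; field_simp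
        have e2 : ((1 - t) * f 0 + t * f x) * x = (x - x₀) * f 0 + x₀ * f x := by
          rw [← e1]; ring
        linarith [this, e2.symm ▸ this]
      have hfx : 0 ≤ f x := by nlinarith
      rw [abs_of_neg hf0, abs_of_nonneg hfx, habs, abs_of_pos (by linarith : 0 < x - x₀)]
      rw [mul_comm, div_mul_eq_mul_div, div_le_iff₀ ha]
      nlinarith

/-- Lemma: for a continuous convex function `f` on `[0,a]` with `f 0 < 0`,
`∫₀ᵃ x^(α-1) |f x|^p dx ≥ C(α,p) |f 0|^p a^α`, where
`C(α,p) = inf_{0 ≤ β ≤ 1} ∫₀¹ u^(α-1) |u-β|^p du`. -/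
theorem stmt0 (a α p : ℝ) (ha : 0 < a) (hα : 0 < α) (hp : 0 < p)
    (f : ℝ → ℝ) (hcont : ContinuousOn f (Icc 0 a))
    (hconv : ConvexOn ℝ (Icc 0 a) f) (hf0 : f 0 < 0) :
    sInf ((fun β : ℝ => ∫ u in Icc (0:ℝ) 1, u ^ (α - 1) * |u - β| ^ p) '' Icc (0:ℝ) 1)
        * |f 0| ^ p * a ^ α
      ≤ ∫ x in Icc (0:ℝ) a, x ^ (α - 1) * |f x| ^ p := by
  obtain ⟨β, hβ, hpt⟩ := exists_beta_aux ha hcont hconv hf0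
  set S := (fun β : ℝ => ∫ u in Icc (0:ℝ) 1, u ^ (α - 1) * |u - β| ^ p) '' Icc (0:ℝ) 1 with hS
  set Iβ := ∫ u in Icc (0:ℝ) 1, u ^ (α - 1) * |u - β| ^ p with hIβ
  -- Step 1 : sInf S ≤ Iβ
  have hbdd : BddBelow S := by
    refine ⟨0, fun y hy => ?_⟩
    obtain ⟨γ, _, rfl⟩ := hy
    exact setIntegral_nonneg measurableSet_Icc fun u hu =>
      mul_nonneg (Real.rpow_nonneg hu.1 _) (Real.rpow_nonneg (abs_nonneg _) _)
  have hstep1 : sInf S ≤ Iβ := csInf_le hbdd ⟨β, hβ, rfl⟩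
  -- integrability facts
  have hintr : IntegrableOn (fun x => x ^ (α - 1) * |f x| ^ p) (Icc 0 a) := by
    obtain ⟨M, hM⟩ := (isCompact_Icc : IsCompact (Icc (0:ℝ) a)).exists_bound_of_continuousOn hcont
    have hg : AEMeasurable (fun x => |f x| ^ p) (volume.restrict (Icc 0 a)) := by
      have h1 : AEMeasurable f (volume.restrict (Icc 0 a)) :=
        hcont.aemeasurable measurableSet_Icc
      have h2 : Measurable fun u : ℝ => |u| ^ p :=
        (continuous_abs.rpow_const fun _ => Or.inr hp.le).measurable
      exact h2.comp_aemeasurable h1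
    refine integrableOn_aux ha hα hg (M := M ^ p) fun x hx => ?_
    have h3 : |f x| ^ p ≤ M ^ p :=
      Real.rpow_le_rpow (abs_nonneg _) (hM x hx) hp.le
    rwa [abs_of_nonneg (Real.rpow_nonneg (abs_nonneg _) _)]
  have hintl : IntegrableOn (fun x => x ^ (α - 1) * (|f 0| * |x / a - β|) ^ p) (Icc 0 a) := by
    have hg : AEMeasurable (fun x => (|f 0| * |x / a - β|) ^ p) (volume.restrict (Icc 0 a)) := by
      have hc2 : Continuous fun x : ℝ => |f 0| * |x / a - β| :=
        continuous_const.mul ((continuous_id.div_const a).sub continuous_const).abs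
      exact ((hc2.rpow_const fun _ => Or.inr hp.le).measurable).aemeasurable
    refine integrableOn_aux ha hα hg (M := (|f 0| * (1 + |β|)) ^ p) fun x hx => ?_
    have hb : |f 0| * |x / a - β| ≤ |f 0| * (1 + |β|) := by
      have : |x / a - β| ≤ 1 + |β| := by
        calc |x / a - β| ≤ |x / a| + |β| := abs_sub _ _
          _ ≤ 1 + |β| := by
              have : |x / a| ≤ 1 := by
                rw [abs_of_nonneg (div_nonneg hx.1 ha.le)]
                exact (div_le_one ha).2 hx.2
              linarith
      exact mul_le_mul_of_nonneg_left this (abs_nonneg _)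
    have h3 : (|f 0| * |x / a - β|) ^ p ≤ (|f 0| * (1 + |β|)) ^ p :=
      Real.rpow_le_rpow (mul_nonneg (abs_nonneg _) (abs_nonneg _)) hb hp.le
    rwa [abs_of_nonneg (Real.rpow_nonneg (mul_nonneg (abs_nonneg _) (abs_nonneg _)) _)]
  -- Step 2 : Iβ * |f 0| ^ p * a ^ α equals an integral over [0,a]
  have hstep2 : Iβ * |f 0| ^ p * a ^ α
      = ∫ x in Icc (0:ℝ) a, x ^ (α - 1) * (|f 0| * |x / a - β|) ^ p := by
    have hcongr : ∀ x : ℝ, x ^ (α - 1) * (|f 0| * |x / a - β|) ^ p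
        = |f 0| ^ p * (x ^ (α - 1) * |x / a - β| ^ p) := by
      intro x
      rw [Real.mul_rpow (abs_nonneg _) (abs_nonneg _)]; ring
    simp_rw [hcongr]
    rw [integral_const_mul, subst_aux ha hα p β, ← hIβ]; ring
  -- Step 3 : pointwise comparison of integrals
  have hstep3 : ∫ x in Icc (0:ℝ) a, x ^ (α - 1) * (|f 0| * |x / a - β|) ^ p
      ≤ ∫ x in Icc (0:ℝ) a, x ^ (α - 1) * |f x| ^ p := by
    refine setIntegral_mono_on hintl hintr measurableSet_Icc fun x hx => ?_
    refine mul_le_mul_of_nonneg_left ?_ (Real.rpow_nonneg hx.1 _)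
    exact Real.rpow_le_rpow (mul_nonneg (abs_nonneg _) (abs_nonneg _)) (hpt x hx) hp.le
  calc sInf S * |f 0| ^ p * a ^ α ≤ Iβ * |f 0| ^ p * a ^ α := by
        have h1 : (0:ℝ) ≤ |f 0| ^ p := Real.rpow_nonneg (abs_nonneg _) _
        have h2 : (0:ℝ) ≤ a ^ α := Real.rpow_nonneg ha.le _
        exact mul_le_mul_of_nonneg_right (mul_le_mul_of_nonneg_right hstep1 h1) h2
    _ = _ := hstep2
    _ ≤ _ := hstep3
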